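/- arXiv:2310.05783 — 7 statements merged into one kernel-verified Lean document; each statement's English description precedes it below -/
import Mathlib

section
/- Let V be a finite-dimensional ℤ/2ℤ-vector space equipped with a nondegenerate symmetric bilinear form ⟨·,·⟩, and let f : V → V be a linear isomorphism preserving the form. Then there exists a quadratic refinement q of ⟨·,·⟩ such that q(f(x)) = q(x) for all x ∈ V. -/
/-- A quadratic refinement of a bilinear form `B` on a `ZMod 2`-vector space. -/
def IsQuadRef {V : Type*} [AddCommGroup V] [Module (ZMod 2) V]
    (B : V → V → ZMod 2) (q : V → ZMod 2) : Prop :=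
  ∀ x y, q (x + y) = q x + q y + B x y

/-- A linear automorphism preserving a nondegenerate symmetric bilinear form
(admitting a quadratic refinement) on a finite-dimensional `ZMod 2`-vector space has an
invariant quadratic refinement. -/
theorem exists_invariant_quadRef {V : Type*} [AddCommGroup V] [Module (ZMod 2) V]
    [FiniteDimensional (ZMod 2) V]
    (B : V →ₗ[ZMod 2] V →ₗ[ZMod 2] ZMod 2) (hsymm : ∀ x y, B x y = B y x)
    (hnondeg : ∀ x, (∀ y, B x y = 0) → x = 0)
    (f : V ≃ₗ[ZMod 2] V) (hf : ∀ x y, B (f x) (f y) = B x y)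
    (hex : ∃ q₀ : V → ZMod 2, IsQuadRef (fun x y => B x y) q₀) :
    ∃ q : V → ZMod 2, IsQuadRef (fun x y => B x y) q ∧ ∀ x, q (f x) = q x := by
  obtain ⟨q₀, hq₀'⟩ := hex
  have hq₀ : ∀ x y, q₀ (x + y) = q₀ x + q₀ y + B x y := hq₀'
  have h2z : ∀ t : ZMod 2, t + t = 0 := by decide
  have hq00 : q₀ 0 = 0 := by have := hq₀ 0 0; simpa using this.symm
  -- the defect g x = q₀ (f x) + q₀ x is linear
  have hgadd : ∀ x y : V, q₀ (f (x + y)) + q₀ (x + y)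
      = (q₀ (f x) + q₀ x) + (q₀ (f y) + q₀ y) := by
    intro x y
    rw [map_add, hq₀ (f x) (f y), hq₀ x y, hf]
    linear_combination h2z ((B x) y)
  have hsmul : ∀ (c : ZMod 2) (x : V),
      q₀ (f (c • x)) + q₀ (c • x) = c • (q₀ (f x) + q₀ x) := by
    intro c x
    fin_cases c
    · show q₀ (f ((0 : ZMod 2) • x)) + q₀ ((0 : ZMod 2) • x) = (0 : ZMod 2) • _
      simp [hq00]
    · show q₀ (f ((1 : ZMod 2) • x)) + q₀ ((1 : ZMod 2) • x) = (1 : ZMod 2) • _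
      simp
  let g : V →ₗ[ZMod 2] ZMod 2 :=
    { toFun := fun x => q₀ (f x) + q₀ x
      map_add' := hgadd
      map_smul' := hsmul }
  -- B, viewed as map into the dual, is bijective
  have hBinj : Function.Injective B := by
    rw [← LinearMap.ker_eq_bot, eq_bot_iff]
    intro x hx
    exact hnondeg x (LinearMap.ext_iff.mp hx) ▸ Submodule.zero_mem _
  have hBsurj : Function.Surjective (B : V →ₗ[ZMod 2] Module.Dual (ZMod 2) V) := by
    rwa [← LinearMap.injective_iff_surjective_of_finrank_eq_finrank
      (Subspace.dual_finrank_eq).symm]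
  obtain ⟨c, hc⟩ := hBsurj g
  have hcg : ∀ x, B c x = q₀ (f x) + q₀ x := fun x => by rw [hc]; rfl
  -- c lies in the range of S = id + f⁻¹
  set S : V →ₗ[ZMod 2] V := LinearMap.id + f.symm.toLinearMap with hS
  have hneg : ∀ x : V, -x = x := fun x => by
    rw [← neg_one_smul (ZMod 2) x, show (-1 : ZMod 2) = 1 by decide, one_smul]
  have hBSf : ∀ x y : V, B x (S y) = B (x + f x) y := by
    intro x y
    have h1 : B (f x) y = B x (f.symm y) := by
      conv_rhs => rw [← hf x (f.symm y), f.apply_symm_apply]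
    simp [hS, map_add, h1]
  have hcmem : c ∈ LinearMap.range S := by
    by_contra hcn
    have hq : Submodule.Quotient.mk (p := LinearMap.range S) c ≠ 0 := by
      simpa [Submodule.Quotient.mk_eq_zero] using hcn
    obtain ⟨ψ, hψ⟩ : ∃ ψ : Module.Dual (ZMod 2) (V ⧸ LinearMap.range S),
        ψ (Submodule.Quotient.mk c) ≠ 0 := by
      by_contra h
      push_neg at h
      exact hq ((Module.forall_dual_apply_eq_zero_iff (ZMod 2) _).mp h)
    set φ : Module.Dual (ZMod 2) V :=
      ψ.comp (LinearMap.range S).mkQ with hφ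
    obtain ⟨x, hx⟩ := hBsurj φ
    have hφS : ∀ y, φ (S y) = 0 := by
      intro y
      have hz : ((Submodule.Quotient.mk (S y)) : V ⧸ LinearMap.range S) = 0 :=
        (Submodule.Quotient.mk_eq_zero _).mpr ⟨y, rfl⟩
      show ψ (Submodule.Quotient.mk (S y)) = 0
      rw [hz, map_zero]
    -- so B (x + f x) y = 0 for all y, hence f x = x
    have hTx : x + f x = 0 := by
      apply hnondeg
      intro y
      rw [← hBSf x y, ← hφS y, hx]
    have hfx : f x = x := by
      have : f x = -x := by linear_combination (norm := abel) hTx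
      rw [this, hneg]
    -- hence B c x = q₀ (f x) + q₀ x = 0, contradicting φ c ≠ 0
    have h0 : B c x = 0 := by rw [hcg, hfx]; exact h2z _
    have hφc : φ c ≠ 0 := hψ
    exact hφc (by rw [← hx, hsymm]; exact h0)
  obtain ⟨a, ha⟩ := hcmem
  -- invariant refinement
  refine ⟨fun x => q₀ x + B a x, fun x y => ?_, fun x => ?_⟩
  · show q₀ (x + y) + B a (x + y) = (q₀ x + B a x) + (q₀ y + B a y) + B x y
    rw [hq₀ x y, map_add]; ring
  · show q₀ (f x) + B a (f x) = q₀ x + B a x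
    have h1 : B a (f x) = B (f.symm a) x := by
      conv_lhs => rw [← f.apply_symm_apply a, hf]
    have h3 : B a x + B (f.symm a) x = q₀ (f x) + q₀ x := by
      have h2 : B (S a) x = q₀ (f x) + q₀ x := by rw [ha, hcg]
      rw [← h2]; simp [hS]
    rw [h1]
    linear_combination h3 + h2z (q₀ (f x)) - h2z ((B a) x)
end

section
/- Let V be a finite-dimensional ℤ/2ℤ-vector space with a symmetric bilinear form ⟨·,·⟩ admitting at least one quadratic refinement, and let f : V → V be a linear isomorphism preserving the form that fixes some quadratic refinement q₀ (i.e., q₀ ∘ f = q₀). Then the number of f-invariant quadratic refinements of ⟨·,·⟩ equals 2^d, where d = dim ker(f - id). -/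
/-- If a form-preserving automorphism `f` fixes some quadratic refinement `q₀`,
then the number of `f`-invariant quadratic refinements equals `2 ^ dim ker (f - id)`. -/
theorem card_invariant_quadRefs {V : Type*} [AddCommGroup V] [Module (ZMod 2) V]
    [FiniteDimensional (ZMod 2) V]
    (B : V →ₗ[ZMod 2] V →ₗ[ZMod 2] ZMod 2) (hsymm : ∀ x y, B x y = B y x)
    (f : V ≃ₗ[ZMod 2] V) (hf : ∀ x y, B (f x) (f y) = B x y)
    (q₀ : V → ZMod 2) (hq₀ : IsQuadRef (fun x y => B x y) q₀)
    (hinv₀ : ∀ x, q₀ (f x) = q₀ x) :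
    Nat.card {q : V → ZMod 2 // IsQuadRef (fun x y => B x y) q ∧ ∀ x, q (f x) = q x} =
      2 ^ Module.finrank (ZMod 2) (LinearMap.ker (f.toLinearMap - LinearMap.id)) := by
  classical
  set g : V →ₗ[ZMod 2] V := f.toLinearMap - LinearMap.id with hg
  set K := LinearMap.ker (g.dualMap) with hK
  have two_eq_zero : ∀ a : ZMod 2, a + a = 0 := by decide
  have hvv : ∀ v : V, v + v = 0 := by
    intro v
    have : (2 : ZMod 2) • v = 0 := by rw [show (2 : ZMod 2) = 0 from rfl, zero_smul]
    rwa [two_smul] at this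
  have hsub : ∀ v w : V, v - w = v + w := by
    intro v w
    rw [sub_eq_add_neg, neg_eq_of_add_eq_zero_left (hvv w)]
  -- differences are additive
  have hadd : ∀ (q : V → ZMod 2), IsQuadRef (fun x y => B x y) q →
      ∀ a b : V, q (a + b) + q₀ (a + b) = (q a + q₀ a) + (q b + q₀ b) := by
    intro q hq a b
    rw [hq a b, hq₀ a b]
    simp only []
    rw [show q a + q b + B a b + (q₀ a + q₀ b + B a b)
        = (q a + q₀ a) + (q b + q₀ b) + (B a b + B a b) by ring, two_eq_zero, add_zero]
  have e : {q : V → ZMod 2 // IsQuadRef (fun x y => B x y) q ∧ ∀ x, q (f x) = q x} ≃ K := by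
    refine
      { toFun := fun q => ⟨((AddMonoidHom.mk' (fun x => q.1 x + q₀ x)
          (fun a b => hadd q.1 q.2.1 a b)).toZModLinearMap 2), ?_⟩
        invFun := fun ε => ⟨fun x => q₀ x + ε.1 x, ?_, ?_⟩
        left_inv := ?_, right_inv := ?_ }
    · -- in kernel
      rw [hK, LinearMap.mem_ker]
      apply LinearMap.ext
      intro x
      rw [LinearMap.dualMap_apply, LinearMap.zero_apply]
      show q.1 (g x) + q₀ (g x) = 0
      have hgx : g x = f x + x := by rw [hg]; simp [hsub]
      rw [hgx, hadd q.1 q.2.1, q.2.2, hinv₀]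
      exact two_eq_zero _
    · -- q₀ + ε is quad ref
      intro x y
      show q₀ (x + y) + ε.1 (x + y) = (q₀ x + ε.1 x) + (q₀ y + ε.1 y) + B x y
      rw [hq₀ x y, map_add]
      ring
    · -- invariant
      intro x
      show q₀ (f x) + ε.1 (f x) = q₀ x + ε.1 x
      have hker : g.dualMap ε.1 = 0 := ε.2
      have hx : ε.1 (g x) = 0 := by
        have h := LinearMap.congr_fun hker x
        rwa [LinearMap.dualMap_apply, LinearMap.zero_apply] at h
      have hgx : g x = f x + x := by rw [hg]; simp [hsub]
      rw [hgx, map_add] at hx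
      have : ε.1 (f x) = ε.1 x := by
        have := congrArg (· + ε.1 x) hx
        simpa [add_assoc, two_eq_zero, hvv] using this
      rw [hinv₀, this]
    · intro q
      ext x
      show q₀ x + (q.1 x + q₀ x) = q.1 x
      rw [add_comm (q.1 x) (q₀ x), ← add_assoc, two_eq_zero, zero_add]
    · intro ε
      apply Subtype.ext
      apply LinearMap.ext
      intro x
      show (q₀ x + ε.1 x) + q₀ x = ε.1 x
      rw [add_comm (q₀ x) (ε.1 x), add_assoc, two_eq_zero, add_zero]
  rw [Nat.card_congr e]
  haveI : Finite K := Module.finite_of_finite (ZMod 2)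
  haveI : Fintype K := Fintype.ofFinite K
  have hcard : Nat.card K = 2 ^ Module.finrank (ZMod 2) K := by
    rw [Nat.card_eq_fintype_card, Module.card_eq_pow_finrank (K := ZMod 2), ZMod.card]
  rw [hcard]
  congr 1
  have h1 := LinearMap.finrank_range_dualMap_eq_finrank_range g
  have h2 : Module.finrank (ZMod 2) (LinearMap.range g.dualMap)
      + Module.finrank (ZMod 2) (LinearMap.ker g.dualMap)
      = Module.finrank (ZMod 2) (Module.Dual (ZMod 2) V) :=
    LinearMap.finrank_range_add_finrank_ker g.dualMap
  have h3 : Module.finrank (ZMod 2) (LinearMap.range g)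
      + Module.finrank (ZMod 2) (LinearMap.ker g)
      = Module.finrank (ZMod 2) V :=
    LinearMap.finrank_range_add_finrank_ker g
  have h4 : Module.finrank (ZMod 2) (Module.Dual (ZMod 2) V)
      = Module.finrank (ZMod 2) V := Subspace.dual_finrank_eq
  rw [hK]
  omega
end

section
/- Let V be a finite-dimensional ℤ/2ℤ-vector space with a symmetric bilinear form ⟨·,·⟩ with ⟨x,x⟩ = 0 for all x, and let f be a form-preserving linear automorphism of V such that f - id is bijective. Then the function q(x) := ⟨x, (f - id)⁻¹(x)⟩ is the unique f-invariant quadratic refinement of ⟨·,·⟩. -/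
/-- If `f` preserves an alternating form and `f - id` is bijective (given here
as a linear equivalence `e` with `e x = f x - x`), then `q(x) := ⟨x, (f - id)⁻¹ x⟩` is the
unique `f`-invariant quadratic refinement. -/
theorem unique_invariant_quadRef {V : Type*} [AddCommGroup V] [Module (ZMod 2) V]
    [FiniteDimensional (ZMod 2) V]
    (B : V →ₗ[ZMod 2] V →ₗ[ZMod 2] ZMod 2) (hsymm : ∀ x y, B x y = B y x)
    (halt : ∀ x, B x x = 0)
    (f : V ≃ₗ[ZMod 2] V) (hf : ∀ x y, B (f x) (f y) = B x y)
    (e : V ≃ₗ[ZMod 2] V) (he : ∀ x, e x = f x - x) :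
    (IsQuadRef (fun x y => B x y) (fun x => B x (e.symm x)) ∧
      ∀ x, B (f x) (e.symm (f x)) = B x (e.symm x)) ∧
    ∀ q : V → ZMod 2, IsQuadRef (fun x y => B x y) q → (∀ x, q (f x) = q x) →
      q = fun x => B x (e.symm x) := by
  -- char 2 basics
  have hneg : ∀ v : V, -v = v := by
    intro v
    have h1 : (-1 : ZMod 2) = 1 := by decide
    calc -v = (-1 : ZMod 2) • v := (neg_one_smul _ v).symm
    _ = v := by rw [h1, one_smul]
  have hsub : ∀ v w : V, v - w = v + w := by
    intro v w; rw [sub_eq_add_neg, hneg]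
  have h2 : ∀ a : ZMod 2, a + a = 0 := by decide
  -- e x = f x + x
  have he' : ∀ x, e x = f x + x := fun x => by rw [he, hsub]
  -- x = f (e.symm x) + e.symm x
  have hx : ∀ x : V, x = f (e.symm x) + e.symm x := by
    intro x
    conv_lhs => rw [← e.apply_symm_apply x, he']
  -- f commutes with e.symm
  have hcomm : ∀ x, e.symm (f x) = f (e.symm x) := by
    intro x
    apply e.injective
    rw [e.apply_symm_apply, he', ← map_add, ← he', e.apply_symm_apply]
  refine ⟨⟨?_, ?_⟩, ?_⟩
  · intro x y
    simp only [map_add, LinearMap.add_apply]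
    -- goal: B (x+y) (g x + g y) = B x (g x) + B y (g y) + B x y
    have key : B x (e.symm y) + B y (e.symm x) = B x y := by
      set u := e.symm x with hu
      set v := e.symm y with hv
      have hxu : x = f u + u := hx x
      have hyv : y = f v + v := hx y
      rw [hxu, hyv]
      simp only [map_add, LinearMap.add_apply]
      linear_combination hsymm (f v) u - hf u v - hsymm u v
    rw [← key]; ring
  · intro x
    rw [hcomm, hf]
  · intro q hq hinv
    funext x
    set u := e.symm x with hu
    have hxu : x = f u + u := hx x
    have h1 : q x = q (f u) + q u + B (f u) u := by rw [hxu]; exact hq _ _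
    rw [h1, hinv u, h2, zero_add]
    rw [hxu]
    simp only [map_add, LinearMap.add_apply, halt u, add_zero]
end

section
/- Let V be a 2g-dimensional ℤ/2ℤ-vector space with a nondegenerate alternating form and symplectic basis, let f be a form-preserving automorphism with an invariant quadratic refinement q₀, and let ξ₁,…,ξ_d be a basis of {ξ ∈ V* : ξ ∘ (f − id) = 0}. Then there exists an f-invariant quadratic refinement q with Arf(q) = 0 if and only if 0 belongs to the set {Arf(q₀)} ∪ {Arf(q₀+ξᵢ) : i} ∪ {Arf(q₀+ξᵢ+ξⱼ) : i ≠ j}. -/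
private lemma zmod2_key6 : ∀ p r u v u' v' : ZMod 2,
    (p + (u + u')) * (r + (v + v')) =
      (p + u) * (r + v) + (p + u') * (r + v') + p * r + (u * v' + u' * v) := by decide

private lemma zmod2_two : ∀ x : ZMod 2, x + x = 0 := by decide

private lemma zmod2_cases : ∀ x : ZMod 2, x = 0 ∨ x = 1 := by decide

private lemma zmod2_ne : ∀ x : ZMod 2, x ≠ 0 → x = 1 := by decide

private lemma zmod2_solve : ∀ β : ZMod 2, (1 : ZMod 2) = 1 + 1 + 1 + β → β = 0 := by decide

private lemma zmod2_rearr : ∀ u v : ZMod 2, u = v + (u + v) := by decide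

section Aux

variable {V : Type*} [AddCommGroup V] [Module (ZMod 2) V]
variable {g : ℕ} (a b : Fin g → V) (q₀ : V → ZMod 2)

/-- Quadratic expansion of the Arf sum of `q₀ + (η + θ)`. -/
private lemma arf_sum_add (η θ : V →ₗ[ZMod 2] ZMod 2) :
    ∑ i, (q₀ (a i) + (η + θ) (a i)) * (q₀ (b i) + (η + θ) (b i)) =
      (∑ i, (q₀ (a i) + η (a i)) * (q₀ (b i) + η (b i))) +
      (∑ i, (q₀ (a i) + θ (a i)) * (q₀ (b i) + θ (b i))) +
      (∑ i, q₀ (a i) * q₀ (b i)) +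
      (∑ i, (η (a i) * θ (b i) + θ (a i) * η (b i))) := by
  rw [← Finset.sum_add_distrib, ← Finset.sum_add_distrib, ← Finset.sum_add_distrib]
  refine Finset.sum_congr rfl fun i _ => ?_
  simp only [LinearMap.add_apply]
  exact zmod2_key6 _ _ _ _ _ _

private lemma beta_sum_zero {d : ℕ} (ξ : Fin d → (V →ₗ[ZMod 2] ZMod 2))
    (hβ : ∀ i j, i ≠ j → ∑ k, (ξ i (a k) * ξ j (b k) + ξ j (a k) * ξ i (b k)) = 0)
    (i : Fin d) :
    ∀ S : Finset (Fin d), i ∉ S →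
      ∑ k, (ξ i (a k) * (∑ j ∈ S, ξ j) (b k) + (∑ j ∈ S, ξ j) (a k) * ξ i (b k)) = 0 := by
  intro S
  induction S using Finset.induction_on with
  | empty => intro _; simp
  | @insert j S hj IH =>
    intro hiS
    have hij : i ≠ j := fun h => hiS (h ▸ Finset.mem_insert_self j S)
    have hiS' : i ∉ S := fun h => hiS (Finset.mem_insert_of_mem h)
    rw [Finset.sum_insert hj]
    have hsplit :
        ∑ k, (ξ i (a k) * (ξ j + ∑ l ∈ S, ξ l) (b k) + (ξ j + ∑ l ∈ S, ξ l) (a k) * ξ i (b k)) =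
          (∑ k, (ξ i (a k) * ξ j (b k) + ξ j (a k) * ξ i (b k))) +
          (∑ k, (ξ i (a k) * (∑ l ∈ S, ξ l) (b k) + (∑ l ∈ S, ξ l) (a k) * ξ i (b k))) := by
      rw [← Finset.sum_add_distrib]
      refine Finset.sum_congr rfl fun k _ => ?_
      simp only [LinearMap.add_apply]
      ring
    rw [hsplit, hβ i j hij, IH hiS', add_zero]

private lemma arf_subset_one {d : ℕ} (ξ : Fin d → (V →ₗ[ZMod 2] ZMod 2))
    (hA : ∑ i, q₀ (a i) * q₀ (b i) = 1)
    (h1 : ∀ i, ∑ k, (q₀ (a k) + ξ i (a k)) * (q₀ (b k) + ξ i (b k)) = 1)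
    (hβ : ∀ i j, i ≠ j → ∑ k, (ξ i (a k) * ξ j (b k) + ξ j (a k) * ξ i (b k)) = 0) :
    ∀ S : Finset (Fin d),
      ∑ k, (q₀ (a k) + (∑ j ∈ S, ξ j) (a k)) * (q₀ (b k) + (∑ j ∈ S, ξ j) (b k)) = 1 := by
  intro S
  induction S using Finset.induction_on with
  | empty => simpa using hA
  | @insert i S hi IH =>
    rw [Finset.sum_insert hi, arf_sum_add a b q₀ (ξ i) (∑ j ∈ S, ξ j), h1 i, IH, hA,
      beta_sum_zero a b ξ hβ i S hi]
    decide

end Aux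

/-- Criterion for the existence of an `f`-invariant quadratic refinement with
Arf invariant `0`: with `q₀` an `f`-invariant refinement and `ξ₁,…,ξ_d` a basis of
`{ξ ∈ V* : ξ ∘ (f − id) = 0}`, such a refinement exists iff `0` occurs among
`Arf(q₀)`, `Arf(q₀+ξᵢ)`, `Arf(q₀+ξᵢ+ξⱼ)` (`i ≠ j`). -/
theorem exists_invariant_arf_zero_iff {V : Type*} [AddCommGroup V] [Module (ZMod 2) V]
    [FiniteDimensional (ZMod 2) V]
    (B : V →ₗ[ZMod 2] V →ₗ[ZMod 2] ZMod 2) (hsymm : ∀ x y, B x y = B y x)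
    (halt : ∀ x, B x x = 0)
    (g : ℕ) (a b : Fin g → V)
    (hab : ∀ i j, B (a i) (b j) = if i = j then 1 else 0)
    (haa : ∀ i j, B (a i) (a j) = 0) (hbb : ∀ i j, B (b i) (b j) = 0)
    (bas : Module.Basis (Fin g ⊕ Fin g) (ZMod 2) V)
    (hbas : ∀ i, bas (Sum.inl i) = a i ∧ bas (Sum.inr i) = b i)
    (f : V ≃ₗ[ZMod 2] V) (hf : ∀ x y, B (f x) (f y) = B x y)
    (q₀ : V → ZMod 2) (hq₀ : IsQuadRef (fun x y => B x y) q₀)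
    (hinv₀ : ∀ x, q₀ (f x) = q₀ x)
    (d : ℕ) (ξ : Fin d → (V →ₗ[ZMod 2] ZMod 2))
    (hξ : ∀ i x, ξ i (f x - x) = 0)
    (hξindep : LinearIndependent (ZMod 2) ξ)
    (hξspan : ∀ η : V →ₗ[ZMod 2] ZMod 2, (∀ x, η (f x - x) = 0) →
      η ∈ Submodule.span (ZMod 2) (Set.range ξ)) :
    (∃ q : V → ZMod 2, IsQuadRef (fun x y => B x y) q ∧ (∀ x, q (f x) = q x) ∧
        ∑ i, q (a i) * q (b i) = 0) ↔
      ((∑ i, q₀ (a i) * q₀ (b i)) = 0 ∨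
        (∃ i, (∑ k, (q₀ (a k) + ξ i (a k)) * (q₀ (b k) + ξ i (b k))) = 0) ∨
        (∃ i j, i ≠ j ∧
          (∑ k, (q₀ (a k) + ξ i (a k) + ξ j (a k)) * (q₀ (b k) + ξ i (b k) + ξ j (b k))) = 0)) := by
  -- general fact: for η linear and invariant, q₀ + η is an invariant refinement
  have hgen : ∀ η : V →ₗ[ZMod 2] ZMod 2, (∀ x, η (f x - x) = 0) →
      IsQuadRef (fun x y => B x y) (fun x => q₀ x + η x) ∧
        (∀ x, q₀ (f x) + η (f x) = q₀ x + η x) := by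
    intro η hη
    have hηinv : ∀ x, η (f x) = η x := by
      intro x
      have := hη x
      rw [map_sub, sub_eq_zero] at this
      exact this
    refine ⟨fun x y => ?_, fun x => by rw [hinv₀, hηinv]⟩
    show q₀ (x + y) + η (x + y) = (q₀ x + η x) + (q₀ y + η y) + B x y
    rw [map_add, hq₀ x y]
    ring
  constructor
  · -- forward direction
    rintro ⟨q, hq, hqinv, harf⟩
    -- q₀ 0 = 0 and q 0 = 0
    have hzero : ∀ r : V → ZMod 2, IsQuadRef (fun x y => B x y) r → r 0 = 0 := by
      intro r hr
      have := hr 0 0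
      simp only [add_zero, map_zero, LinearMap.zero_apply] at this
      have h2 := zmod2_two (r 0)
      rw [this]
      exact h2
    -- build the linear map η = q + q₀
    have hadd : ∀ x y, q x + q₀ x + (q y + q₀ y) = q (x + y) + q₀ (x + y) := by
      intro x y
      rw [hq x y, hq₀ x y]
      have := zmod2_two (B x y)
      linear_combination -this
    let η : V →ₗ[ZMod 2] ZMod 2 :=
      { toFun := fun x => q x + q₀ x
        map_add' := fun x y => (hadd x y).symm
        map_smul' := by
          intro c x
          rcases zmod2_cases c with hc | hc <;> subst hc
          · simp [hzero q hq, hzero q₀ hq₀]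
          · simp }
    have hηapp : ∀ x, η x = q x + q₀ x := fun x => rfl
    have hηinv : ∀ x, η (f x - x) = 0 := by
      intro x
      rw [map_sub, hηapp, hηapp, hqinv, hinv₀, sub_self]
    obtain ⟨c, hc⟩ := (Submodule.mem_span_range_iff_exists_fun (ZMod 2)).1 (hξspan η hηinv)
    set S : Finset (Fin d) := Finset.univ.filter (fun i => c i = 1) with hS
    have hηS : (∑ j ∈ S, ξ j) = η := by
      rw [← hc, hS, Finset.sum_filter]
      refine Finset.sum_congr rfl fun i _ => ?_
      rcases zmod2_cases (c i) with h | h <;> simp [h]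
    -- Arf of q₀ + η is 0
    have hAqη : ∑ k, (q₀ (a k) + (∑ j ∈ S, ξ j) (a k)) * (q₀ (b k) + (∑ j ∈ S, ξ j) (b k)) = 0 := by
      rw [hηS, ← harf]
      refine Finset.sum_congr rfl fun k _ => ?_
      rw [hηapp, hηapp]
      congr 1 <;> exact (zmod2_rearr _ _).symm
    by_contra hcon
    push_neg at hcon
    obtain ⟨h0, h1, h2⟩ := hcon
    have hA : ∑ i, q₀ (a i) * q₀ (b i) = 1 := zmod2_ne _ h0
    have h1' : ∀ i, ∑ k, (q₀ (a k) + ξ i (a k)) * (q₀ (b k) + ξ i (b k)) = 1 :=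
      fun i => zmod2_ne _ (h1 i)
    have hβ : ∀ i j, i ≠ j → ∑ k, (ξ i (a k) * ξ j (b k) + ξ j (a k) * ξ i (b k)) = 0 := by
      intro i j hij
      have hpair : ∑ k, (q₀ (a k) + (ξ i + ξ j) (a k)) * (q₀ (b k) + (ξ i + ξ j) (b k)) = 1 := by
        have := zmod2_ne _ (h2 i j hij)
        rw [← this]
        refine Finset.sum_congr rfl fun k _ => ?_
        simp only [LinearMap.add_apply, add_assoc]
      have hexp := arf_sum_add a b q₀ (ξ i) (ξ j)
      rw [hpair, h1' i, h1' j, hA] at hexp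
      exact zmod2_solve _ hexp
    have := arf_subset_one a b q₀ ξ hA h1' hβ S
    rw [hAqη] at this
    exact absurd this (by decide)
  · -- backward direction
    rintro (h | ⟨i, h⟩ | ⟨i, j, hij, h⟩)
    · exact ⟨q₀, hq₀, hinv₀, h⟩
    · obtain ⟨hquad, hinv⟩ := hgen (ξ i) (hξ i)
      exact ⟨fun x => q₀ x + ξ i x, hquad, hinv, h⟩
    · have hη : ∀ x, (ξ i + ξ j) (f x - x) = 0 := by
        intro x
        rw [LinearMap.add_apply, hξ i, hξ j, add_zero]
      obtain ⟨hquad, hinv⟩ := hgen (ξ i + ξ j) hη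
      refine ⟨fun x => q₀ x + (ξ i + ξ j) x, hquad, hinv, ?_⟩
      rw [← h]
      refine Finset.sum_congr rfl fun k _ => ?_
      simp only [LinearMap.add_apply, add_assoc]
end

section
/- Let V = (ℤ/2ℤ)^6 with basis c₁,…,c₆ and bilinear form determined by cᵢ·cⱼ = 1 if |i−j| = 1 and 0 otherwise. Let f : V → V be the linear map sending cᵢ to c_{i+1} for i = 1,…,5 and c₆ to c₁ + c₃ + c₅. Then the only quadratic refinements q of the form with q ∘ f = q are the one with q(cᵢ) = 0 for all i and the one with q(cᵢ) = 1 for all i. -/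
/-- The standard basis vectors `c₁, …, c₆` (indexed `0, …, 5`) of `(ZMod 2)^6`. -/
def cvec (i : Fin 6) : Fin 6 → ZMod 2 := Pi.single i 1

/-- The intersection form with `cᵢ · cⱼ = 1` iff `|i − j| = 1`. -/
def Bchain (x y : Fin 6 → ZMod 2) : ZMod 2 :=
  ∑ i : Fin 5, (x i.castSucc * y i.succ + x i.succ * y i.castSucc)

/-- The quadratic refinement vanishing on the basis. -/
def q0 (x : Fin 6 → ZMod 2) : ZMod 2 := ∑ i : Fin 5, x i.castSucc * x i.succ

/-- The quadratic refinement equal to `1` on the basis. -/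
def q1 (x : Fin 6 → ZMod 2) : ZMod 2 := q0 x + ∑ i : Fin 6, x i

/-- The explicit formula for the map `f`. -/
def Fmap (x : Fin 6 → ZMod 2) : Fin 6 → ZMod 2 :=
  ![x 5, x 0, x 1 + x 5, x 2, x 3 + x 5, x 4]

lemma hq0 : IsQuadRef Bchain q0 := by
  intro x y
  simp [q0, Bchain, Fin.sum_univ_five]
  ring

lemma hq1 : IsQuadRef Bchain q1 := by
  intro x y
  have := hq0 x y
  simp [q1, this, Finset.sum_add_distrib]
  ring

lemma hdecomp (x : Fin 6 → ZMod 2) :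
    x = x 0 • cvec 0 + x 1 • cvec 1 + x 2 • cvec 2 + x 3 • cvec 3 + x 4 • cvec 4 + x 5 • cvec 5 := by
  funext j
  fin_cases j <;> simp [cvec]

lemma hF (f : (Fin 6 → ZMod 2) →ₗ[ZMod 2] (Fin 6 → ZMod 2))
    (hf0 : f (cvec 0) = cvec 1) (hf1 : f (cvec 1) = cvec 2)
    (hf2 : f (cvec 2) = cvec 3) (hf3 : f (cvec 3) = cvec 4)
    (hf4 : f (cvec 4) = cvec 5) (hf5 : f (cvec 5) = cvec 0 + cvec 2 + cvec 4)
    (x : Fin 6 → ZMod 2) : f x = Fmap x := by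
  conv_lhs => rw [hdecomp x]
  simp only [map_add, map_smul, hf0, hf1, hf2, hf3, hf4, hf5]
  funext j
  fin_cases j <;> simp [cvec, Fmap] <;> first | rfl | ring

lemma q0F : ∀ x, q0 (Fmap x) = q0 x := by decide
lemma q1F : ∀ x, q1 (Fmap x) = q1 x := by decide
lemma q0c : ∀ i, q0 (cvec i) = 0 := by decide
lemma q1c : ∀ i, q1 (cvec i) = 1 := by decide

/-- Two quadratic refinements of the chain form agreeing on the basis agree everywhere. -/
lemma quad_ext {q q' : (Fin 6 → ZMod 2) → ZMod 2}
    (hq : IsQuadRef Bchain q) (hq' : IsQuadRef Bchain q')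
    (h : ∀ i, q (cvec i) = q' (cvec i)) : q = q' := by
  set d : (Fin 6 → ZMod 2) → ZMod 2 := fun x => q x + q' x with hd
  have hadd : ∀ x y, d (x + y) = d x + d y := by
    intro x y
    simp only [hd, hq x y, hq' x y]
    ring_nf
    rw [show (2 : ZMod 2) = 0 by decide]
    ring
  have h0 : d 0 = 0 := by
    have h00 := hadd 0 0
    simp only [add_zero] at h00
    exact (left_eq_add.mp h00)
  have hzero : ∀ i, d (cvec i) = 0 := by
    intro i
    simp only [hd, h i]
    exact CharTwo.add_self_eq_zero _
  have hsmul : ∀ (z : ZMod 2) (v : Fin 6 → ZMod 2), d (z • v) = z * d v := by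
    intro z v
    fin_cases z
    · show d ((0 : ZMod 2) • v) = (0 : ZMod 2) * d v; rw [zero_smul, zero_mul, h0]
    · show d ((1 : ZMod 2) • v) = (1 : ZMod 2) * d v; rw [one_smul, one_mul]
  funext x
  have hx : d x = 0 := by
    rw [hdecomp x, hadd, hadd, hadd, hadd, hadd]
    simp [hsmul, hzero]
  have hqq : q x + q' x = 0 := hx
  have h2 : q x + q x = 0 := CharTwo.add_self_eq_zero _
  calc q x = q x + 0 := by rw [add_zero]
    _ = q x + (q x + q' x) := by rw [hqq]
    _ = (q x + q x) + q' x := by ring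
    _ = q' x := by rw [h2, zero_add]

lemma two_cases : ∀ z : ZMod 2, z = 0 ∨ z = 1 := by decide

/-- For the linear map `f` with `f(cᵢ) = c_{i+1}` (`1 ≤ i ≤ 5`) and
`f(c₆) = c₁ + c₃ + c₅`, the only `f`-invariant quadratic refinements of the chain form are
the one vanishing on all `cᵢ` and the one equal to `1` on all `cᵢ`. -/
theorem invariant_quadRefs_f33
    (f : (Fin 6 → ZMod 2) →ₗ[ZMod 2] (Fin 6 → ZMod 2))
    (hf0 : f (cvec 0) = cvec 1) (hf1 : f (cvec 1) = cvec 2)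
    (hf2 : f (cvec 2) = cvec 3) (hf3 : f (cvec 3) = cvec 4)
    (hf4 : f (cvec 4) = cvec 5) (hf5 : f (cvec 5) = cvec 0 + cvec 2 + cvec 4) :
    (∀ q : (Fin 6 → ZMod 2) → ZMod 2, IsQuadRef Bchain q →
      ((∀ x, q (f x) = q x) ↔ ((∀ i, q (cvec i) = 0) ∨ (∀ i, q (cvec i) = 1)))) ∧
    (∃ q : (Fin 6 → ZMod 2) → ZMod 2, IsQuadRef Bchain q ∧ (∀ x, q (f x) = q x) ∧
      ∀ i, q (cvec i) = 0) ∧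
    (∃ q : (Fin 6 → ZMod 2) → ZMod 2, IsQuadRef Bchain q ∧ (∀ x, q (f x) = q x) ∧
      ∀ i, q (cvec i) = 1) := by
  have hFx := hF f hf0 hf1 hf2 hf3 hf4 hf5
  refine ⟨?_, ⟨q0, hq0, fun x => by rw [hFx x]; exact q0F x, q0c⟩,
    ⟨q1, hq1, fun x => by rw [hFx x]; exact q1F x, q1c⟩⟩
  intro q hq
  constructor
  · intro hinv
    have e0 : q (cvec 1) = q (cvec 0) := by rw [← hf0, hinv]
    have e1 : q (cvec 2) = q (cvec 1) := by rw [← hf1, hinv]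
    have e2 : q (cvec 3) = q (cvec 2) := by rw [← hf2, hinv]
    have e3 : q (cvec 4) = q (cvec 3) := by rw [← hf3, hinv]
    have e4 : q (cvec 5) = q (cvec 4) := by rw [← hf4, hinv]
    have hall : ∀ i, q (cvec i) = q (cvec 0) := by
      intro i
      fin_cases i <;> simp [e0, e1, e2, e3, e4]
    rcases two_cases (q (cvec 0)) with h | h
    · exact Or.inl (fun i => by rw [hall i, h])
    · exact Or.inr (fun i => by rw [hall i, h])
  · rintro (h | h)
    · have hqe : q = q0 := quad_ext hq hq0 (fun i => by rw [h i, q0c i])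
      subst hqe
      intro x; rw [hFx x]; exact q0F x
    · have hqe : q = q1 := quad_ext hq hq1 (fun i => by rw [h i, q1c i])
      subst hqe
      intro x; rw [hFx x]; exact q1F x
end

section
/- Let V = (ℤ/2ℤ)^6 with basis c₁,…,c₆ and bilinear form cᵢ·cⱼ = 1 iff |i−j| = 1. Let f : V → V be the linear map with f(c₁)=c₁+c₂+c₃, f(c₂)=c₁+c₃+c₄, f(c₃)=c₅, f(c₄)=c₁+c₄+c₅, f(c₅)=c₁+c₄+c₅+c₆, f(c₆)=c₁+c₂+c₄+c₅+c₆. Then every quadratic refinement q of the form with q∘f = q has Arf invariant 1, where Arf(q) = Σ_{i=1}^{3} q(c_{2i})·(Σ_{j=1}^{i} q(c_{2j−1})). -/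
/-- For the linear map `f` (the homology action of the order-8 map `f_{3,7}`),
every `f`-invariant quadratic refinement of the chain form has Arf invariant
`Σ_{i=1}^{3} q(c_{2i})·(Σ_{j=1}^{i} q(c_{2j−1})) = 1`. -/
theorem invariant_quadRefs_f37_arf_one
    (f : (Fin 6 → ZMod 2) →ₗ[ZMod 2] (Fin 6 → ZMod 2))
    (hf0 : f (cvec 0) = cvec 0 + cvec 1 + cvec 2)
    (hf1 : f (cvec 1) = cvec 0 + cvec 2 + cvec 3)
    (hf2 : f (cvec 2) = cvec 4)
    (hf3 : f (cvec 3) = cvec 0 + cvec 3 + cvec 4)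
    (hf4 : f (cvec 4) = cvec 0 + cvec 3 + cvec 4 + cvec 5)
    (hf5 : f (cvec 5) = cvec 0 + cvec 1 + cvec 3 + cvec 4 + cvec 5) :
    ∀ q : (Fin 6 → ZMod 2) → ZMod 2, IsQuadRef Bchain q → (∀ x, q (f x) = q x) →
      (∑ i : Fin 3, q (cvec ((![1, 3, 5] : Fin 3 → Fin 6) i)) *
        ∑ j : Fin 3, if j ≤ i then q (cvec ((![0, 2, 4] : Fin 3 → Fin 6) j)) else 0) = 1 := by
  intro q hq hinv
  simp only [Fin.sum_univ_three, Matrix.cons_val_zero, Matrix.cons_val_one, Matrix.head_cons,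
    Matrix.cons_val_two, Matrix.tail_cons, Fin.isValue]
  norm_num [Fin.le_def]
  -- bilinear form constants
  have b1 : Bchain (cvec 0) (cvec 1) = 1 := by decide
  have b2 : Bchain (cvec 0 + cvec 1) (cvec 2) = 1 := by decide
  have b3 : Bchain (cvec 0) (cvec 2) = 0 := by decide
  have b4 : Bchain (cvec 0 + cvec 2) (cvec 3) = 1 := by decide
  have b5 : Bchain (cvec 0) (cvec 3) = 0 := by decide
  have b6 : Bchain (cvec 0 + cvec 3) (cvec 4) = 1 := by decide
  have b7 : Bchain (cvec 0 + cvec 3 + cvec 4) (cvec 5) = 1 := by decide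
  have b8 : Bchain (cvec 0 + cvec 1) (cvec 3) = 0 := by decide
  have b9 : Bchain (cvec 0 + cvec 1 + cvec 3) (cvec 4) = 1 := by decide
  have b10 : Bchain (cvec 0 + cvec 1 + cvec 3 + cvec 4) (cvec 5) = 1 := by decide
  -- invariance equations
  have E0 := hinv (cvec 0)
  rw [hf0, hq (cvec 0 + cvec 1) (cvec 2), hq (cvec 0) (cvec 1), b1, b2] at E0
  have E1 := hinv (cvec 1)
  rw [hf1, hq (cvec 0 + cvec 2) (cvec 3), hq (cvec 0) (cvec 2), b3, b4] at E1
  have E2 := hinv (cvec 2)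
  rw [hf2] at E2
  have E3 := hinv (cvec 3)
  rw [hf3, hq (cvec 0 + cvec 3) (cvec 4), hq (cvec 0) (cvec 3), b5, b6] at E3
  have E4 := hinv (cvec 4)
  rw [hf4, hq (cvec 0 + cvec 3 + cvec 4) (cvec 5), hq (cvec 0 + cvec 3) (cvec 4),
    hq (cvec 0) (cvec 3), b5, b6, b7] at E4
  have E5 := hinv (cvec 5)
  rw [hf5, hq (cvec 0 + cvec 1 + cvec 3 + cvec 4) (cvec 5),
    hq (cvec 0 + cvec 1 + cvec 3) (cvec 4), hq (cvec 0 + cvec 1) (cvec 3),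
    hq (cvec 0) (cvec 1), b1, b8, b9, b10] at E5
  clear hq hinv hf0 hf1 hf2 hf3 hf4 hf5 b1 b2 b3 b4 b5 b6 b7 b8 b9 b10 f
  revert E0 E1 E2 E3 E4 E5
  generalize q (cvec 0) = a
  generalize q (cvec 1) = b
  generalize q (cvec 2) = c
  generalize q (cvec 3) = d
  generalize q (cvec 4) = e
  generalize q (cvec 5) = g
  clear q
  revert a b c d e g
  set_option synthInstance.maxSize 5000 in decide
end

section
/- Let V₁, …, V_k be ℤ/2ℤ-vector spaces with nondegenerate alternating forms and symplectic bases, each with a form-preserving automorphism fᵢ, and suppose for each i, every fᵢ-invariant quadratic refinement of Vᵢ has the same Arf invariant εᵢ ∈ ℤ/2ℤ. Then the direct sum automorphism f = f₁ ⊕ ⋯ ⊕ f_k on V₁ ⊕ ⋯ ⊕ V_k admits an invariant quadratic refinement with Arf invariant 0 if and only if ε₁ + ⋯ + ε_k = 0 (assuming each fᵢ admits at least one invariant quadratic refinement). -/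
lemma IsQuadRef.map_zero {V : Type*} [AddCommGroup V] [Module (ZMod 2) V]
    {B : V → V → ZMod 2} {q : V → ZMod 2} (hq : IsQuadRef B q) (hB : B 0 0 = 0) :
    q 0 = 0 := by
  have := hq 0 0
  rw [add_zero, hB, add_zero] at this
  rw [CharTwo.add_self_eq_zero] at this
  exact this

/-- If each form-preserving automorphism `fᵢ` of `(Vᵢ, Bᵢ)` admits an
invariant quadratic refinement, and every `fᵢ`-invariant refinement has Arf invariant
`εᵢ`, then the direct sum automorphism admits an invariant quadratic refinement with Arf
invariant `0` iff `ε₁ + ⋯ + ε_k = 0`. -/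
theorem directSum_invariant_arf_zero_iff (k : ℕ) (V : Fin k → Type*)
    [∀ i, AddCommGroup (V i)] [∀ i, Module (ZMod 2) (V i)]
    (B : ∀ i, V i →ₗ[ZMod 2] V i →ₗ[ZMod 2] ZMod 2)
    (halt : ∀ i x, B i x x = 0)
    (f : ∀ i, V i ≃ₗ[ZMod 2] V i)
    (hf : ∀ i x y, B i (f i x) (f i y) = B i x y)
    (g : Fin k → ℕ) (a : ∀ i, Fin (g i) → V i) (b : ∀ i, Fin (g i) → V i)
    (hab : ∀ i j l, B i (a i j) (b i l) = if j = l then 1 else 0)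
    (haa : ∀ i j l, B i (a i j) (a i l) = 0) (hbb : ∀ i j l, B i (b i j) (b i l) = 0)
    (bas : ∀ i, Module.Basis (Fin (g i) ⊕ Fin (g i)) (ZMod 2) (V i))
    (hbas : ∀ i j, bas i (Sum.inl j) = a i j ∧ bas i (Sum.inr j) = b i j)
    (ε : Fin k → ZMod 2)
    (hexinv : ∀ i, ∃ q : V i → ZMod 2, IsQuadRef (fun x y => B i x y) q ∧
      ∀ x, q (f i x) = q x)
    (hε : ∀ i, ∀ q : V i → ZMod 2, IsQuadRef (fun x y => B i x y) q →
      (∀ x, q (f i x) = q x) → (∑ j, q (a i j) * q (b i j)) = ε i) :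
    (∃ q : (∀ i, V i) → ZMod 2,
      IsQuadRef (fun x y => ∑ i, B i (x i) (y i)) q ∧
      (∀ x, q (fun i => f i (x i)) = q x) ∧
      (∑ i, ∑ j, q (Pi.single i (a i j)) * q (Pi.single i (b i j))) = 0) ↔
    (∑ i, ε i) = 0 := by
  constructor
  · rintro ⟨q, hq, hinv, harf⟩
    -- restrict q to each summand
    have key : ∀ i : Fin k, (∑ j, q (Pi.single i (a i j)) * q (Pi.single i (b i j))) = ε i := by
      intro i
      apply hε i (fun x => q (Pi.single i x))
      · intro x y
        show q (Pi.single i (x + y)) = q (Pi.single i x) + q (Pi.single i y) + B i x y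
        have h1 : Pi.single i (x + y) = Pi.single i x + Pi.single i y := by
          simp [Pi.single_add]
        rw [h1, hq]
        congr 1
        show (∑ l, B l ((Pi.single i x : ∀ m, V m) l) ((Pi.single i y : ∀ m, V m) l)) = B i x y
        rw [Finset.sum_eq_single i]
        · simp
        · intro l _ hl
          rw [Pi.single_eq_of_ne hl, Pi.single_eq_of_ne hl]
          simp
        · simp
      · intro x
        have h1 : (fun l => f l ((Pi.single i x : ∀ i, V i) l)) = Pi.single i (f i x) := by
          funext l
          by_cases hl : l = i
          · subst hl; simp
          · rw [Pi.single_eq_of_ne hl, Pi.single_eq_of_ne hl]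
            simp
        calc q (Pi.single i (f i x)) = q (fun l => f l ((Pi.single i x : ∀ i, V i) l)) := by
              rw [h1]
          _ = q (Pi.single i x) := hinv _
    rw [← harf]
    exact Finset.sum_congr rfl fun i _ => (key i).symm
  · intro hsum
    choose q hq hqinv using hexinv
    have hq0 : ∀ i, q i 0 = 0 := fun i => (hq i).map_zero (by simp)
    refine ⟨fun x => ∑ i, q i (x i), ?_, ?_, ?_⟩
    · intro x y
      rw [← Finset.sum_add_distrib, ← Finset.sum_add_distrib]
      exact Finset.sum_congr rfl fun i _ => hq i (x i) (y i)
    · intro x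
      exact Finset.sum_congr rfl fun i _ => hqinv i (x i)
    · have hsingle : ∀ (i : Fin k) (x : V i), (∑ l, q l ((Pi.single i x : ∀ i, V i) l)) = q i x := by
        intro i x
        rw [Finset.sum_eq_single i]
        · simp
        · intro l _ hl
          rw [Pi.single_eq_of_ne hl, hq0]
        · simp
      rw [← hsum]
      refine Finset.sum_congr rfl fun i _ => ?_
      rw [← hε i (q i) (hq i) (hqinv i)]
      refine Finset.sum_congr rfl fun j _ => ?_
      show (∑ l, q l ((Pi.single i (a i j) : ∀ m, V m) l)) * (∑ l, q l ((Pi.single i (b i j) : ∀ m, V m) l)) = _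
      rw [hsingle, hsingle]
end
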